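/- arXiv:1905.09830 — 3 statements merged into one kernel-verified Lean document; each statement's English description precedes it below -/
import Mathlib

section
/- Let V be a vector space over ℂ, let g ≥ 2 be a natural number, let F : V^g → ℂ be a symmetric g-multilinear form, and let S ⊆ V be any subset. Then the following are equivalent: (i) F(p_1, …, p_g) = 0 for all p_1, …, p_g ∈ S such that p_i = p_j for some pair of indices i ≠ j; (ii) F(p, …, p) = 0 for every vector p of the form p = λ_1 p_1 + ⋯ + λ_{g−1} p_{g−1} with λ_1, …, λ_{g−1} ∈ ℂ and p_1, …, p_{g−1} ∈ S. -/
open Finset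

private lemma sum_neg_one_pow_supersets {g : ℕ} (R : Finset (Fin g)) :
    ∑ T ∈ Finset.univ.filter (fun T => R ⊆ T), ((-1 : ℂ)) ^ (g - T.card)
      = if R = Finset.univ then 1 else 0 := by
  classical
  have hbij : ∑ T ∈ Finset.univ.filter (fun T => R ⊆ T), ((-1 : ℂ)) ^ (g - T.card)
      = ∑ U ∈ Rᶜ.powerset, ((-1 : ℂ)) ^ (Rᶜ.card - U.card) := by
    refine Finset.sum_nbij' (fun T => T \ R) (fun U => R ∪ U) ?_ ?_ ?_ ?_ ?_
    · intro T hT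
      simp only [mem_filter, mem_univ, true_and] at hT
      simp only [Finset.mem_powerset]
      intro x hx
      simp only [Finset.mem_sdiff] at hx
      exact Finset.mem_compl.2 hx.2
    · intro U hU
      simp [Finset.mem_filter]
    · intro T hT
      simp only [mem_filter, mem_univ, true_and] at hT
      exact Finset.union_sdiff_of_subset hT
    · intro U hU
      simp only [Finset.mem_powerset] at hU
      show (R ∪ U) \ R = U
      have hd : Disjoint R U := by
        rw [Finset.disjoint_left]
        intro x hxR hxU
        exact (Finset.mem_compl.1 (hU hxU)) hxR
      exact Finset.union_sdiff_cancel_left hd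
    · intro T hT
      simp only [mem_filter, mem_univ, true_and] at hT
      show ((-1 : ℂ)) ^ (g - T.card) = ((-1 : ℂ)) ^ (Rᶜ.card - (T \ R).card)
      congr 1
      have h1 : (T \ R).card = T.card - R.card := Finset.card_sdiff_of_subset hT
      have h1' : R.card ≤ T.card := Finset.card_le_card hT
      have h2 : Rᶜ.card = g - R.card := by
        rw [Finset.card_compl]; simp
      have h4 : T.card ≤ g := by simpa using Finset.card_le_card (Finset.subset_univ T)
      omega
  rw [hbij]
  have hle : ∀ U ∈ Rᶜ.powerset, U.card ≤ Rᶜ.card := fun U hU =>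
    Finset.card_le_card (Finset.mem_powerset.1 hU)
  have hpow : ∀ U ∈ Rᶜ.powerset, ((-1 : ℂ)) ^ (Rᶜ.card - U.card)
      = (-1) ^ Rᶜ.card * (-1) ^ U.card := by
    intro U hU
    have h := hle U hU
    have he : Rᶜ.card + U.card = (Rᶜ.card - U.card) + 2 * U.card := by omega
    have : ((-1 : ℂ)) ^ (Rᶜ.card + U.card) = ((-1 : ℂ)) ^ (Rᶜ.card - U.card) := by
      rw [he, pow_add, pow_mul]
      simp
    rw [← this, pow_add]
  rw [Finset.sum_congr rfl hpow, ← Finset.mul_sum]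
  have hint : (∑ U ∈ Rᶜ.powerset, ((-1 : ℂ)) ^ U.card)
      = ((∑ U ∈ Rᶜ.powerset, ((-1 : ℤ)) ^ U.card : ℤ) : ℂ) := by
    push_cast; rfl
  rw [hint, Finset.sum_powerset_neg_one_pow_card]
  by_cases h : Rᶜ = (∅ : Finset (Fin g))
  · rw [if_pos h, if_pos ((Finset.compl_eq_empty_iff R).1 h)]
    simp [h]
  · rw [if_neg h, if_neg (fun hR => h (by simp [hR]))]
    simp

private lemma polarization_aux {V : Type*} [AddCommGroup V] [Module ℂ V] {g : ℕ}
    (F : MultilinearMap ℂ (fun _ : Fin g => V) ℂ)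
    (hF : ∀ (σ : Equiv.Perm (Fin g)) (v : Fin g → V), F (v ∘ σ) = F v)
    (v : Fin g → V) :
    ∑ T : Finset (Fin g), ((-1 : ℂ)) ^ (g - T.card) * F (fun _ => ∑ i ∈ T, v i)
      = (g.factorial : ℂ) * F v := by
  classical
  have step1 : ∀ T : Finset (Fin g),
      F (fun _ => ∑ i ∈ T, v i)
        = ∑ r : Fin g → Fin g, if (∀ i, r i ∈ T) then F (fun i => v (r i)) else 0 := by
    intro T
    rw [F.map_sum_finset (fun _ j => v j) (fun _ => T)]
    have hpi : Fintype.piFinset (fun _ : Fin g => T)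
        = Finset.univ.filter (fun r : Fin g → Fin g => ∀ i, r i ∈ T) := by
      ext r; simp [Fintype.mem_piFinset]
    rw [hpi, Finset.sum_filter]
  calc ∑ T : Finset (Fin g), ((-1 : ℂ)) ^ (g - T.card) * F (fun _ => ∑ i ∈ T, v i)
      = ∑ T : Finset (Fin g), ∑ r : Fin g → Fin g,
          (if (∀ i, r i ∈ T) then ((-1 : ℂ)) ^ (g - T.card) * F (fun i => v (r i)) else 0) := by
        refine Finset.sum_congr rfl fun T _ => ?_
        rw [step1 T, Finset.mul_sum]
        refine Finset.sum_congr rfl fun r _ => ?_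
        split_ifs <;> simp
    _ = ∑ r : Fin g → Fin g, ∑ T : Finset (Fin g),
          (if (∀ i, r i ∈ T) then ((-1 : ℂ)) ^ (g - T.card) else 0) * F (fun i => v (r i)) := by
        rw [Finset.sum_comm]
        refine Finset.sum_congr rfl fun r _ => Finset.sum_congr rfl fun T _ => ?_
        split_ifs <;> simp
    _ = ∑ r : Fin g → Fin g,
          (if Finset.image r Finset.univ = Finset.univ then 1 else 0) * F (fun i => v (r i)) := by
        refine Finset.sum_congr rfl fun r _ => ?_
        rw [← Finset.sum_mul]
        congr 1
        rw [← Finset.sum_filter]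
        have : Finset.univ.filter (fun T : Finset (Fin g) => ∀ i, r i ∈ T)
            = Finset.univ.filter (fun T => Finset.image r Finset.univ ⊆ T) := by
          ext T
          simp [Finset.image_subset_iff]
        rw [this]
        exact sum_neg_one_pow_supersets _
    _ = ∑ r ∈ Finset.univ.filter (fun r : Fin g → Fin g => Function.Bijective r),
          F (fun i => v (r i)) := by
        rw [Finset.sum_filter]
        refine Finset.sum_congr rfl fun r _ => ?_
        have hcond : Finset.image r Finset.univ = Finset.univ ↔ Function.Bijective r := by
          rw [Finset.eq_univ_iff_forall]
          constructor
          · intro h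
            refine Finite.surjective_iff_bijective.1 fun b => ?_
            simpa [Finset.mem_image] using h b
          · intro h b
            simp only [Finset.mem_image]
            obtain ⟨a, ha⟩ := h.2 b
            exact ⟨a, Finset.mem_univ a, ha⟩
        split_ifs with h1 h2 <;> simp_all
    _ = (g.factorial : ℂ) * F v := by
        have hterm : ∀ r ∈ Finset.univ.filter (fun r : Fin g → Fin g => Function.Bijective r),
            F (fun i => v (r i)) = F v := by
          intro r hr
          have hb : Function.Bijective r := (Finset.mem_filter.1 hr).2
          exact hF (Equiv.ofBijective r hb) v
        rw [Finset.sum_congr rfl hterm, Finset.sum_const]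
        have hcard : (Finset.univ.filter (fun r : Fin g → Fin g => Function.Bijective r)).card
            = g.factorial := by
          rw [← Fintype.card_subtype]
          have e : {r : Fin g → Fin g // Function.Bijective r} ≃ Equiv.Perm (Fin g) :=
            { toFun := fun f => Equiv.ofBijective f.1 f.2
              invFun := fun σ => ⟨σ, σ.bijective⟩
              left_inv := fun f => Subtype.ext rfl
              right_inv := fun σ => Equiv.ext fun x => rfl }
          rw [Fintype.card_congr e, Fintype.card_perm, Fintype.card_fin]
        rw [hcard, nsmul_eq_mul]

/-- Proposition 2.3 (multilinear-algebra content): for a symmetric `g`-multilinear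
form `F` on a complex vector space `V` and any subset `S ⊆ V`, vanishing of
`F (p₁, …, p_g)` whenever the `pᵢ ∈ S` and two of them coincide is equivalent to
vanishing of `F (p, …, p)` for every linear combination `p` of `g - 1` points of `S`. -/
theorem symmetric_multilinear_vanishing_equiv
    (V : Type*) [AddCommGroup V] [Module ℂ V]
    (g : ℕ) (hg : 2 ≤ g)
    (F : MultilinearMap ℂ (fun _ : Fin g => V) ℂ)
    (hF : ∀ (σ : Equiv.Perm (Fin g)) (v : Fin g → V), F (v ∘ σ) = F v)
    (S : Set V) :
    (∀ p : Fin g → V, (∀ i, p i ∈ S) →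
        (∃ i j, i ≠ j ∧ p i = p j) → F p = 0) ↔
      (∀ (lam : Fin (g - 1) → ℂ) (q : Fin (g - 1) → V), (∀ i, q i ∈ S) →
        F (fun _ => ∑ i, lam i • q i) = 0) := by
  classical
  constructor
  · -- (i) → (ii)
    intro h lam q hq
    rw [F.map_sum (fun (_ : Fin g) (j : Fin (g - 1)) => lam j • q j)]
    refine Finset.sum_eq_zero fun r _ => ?_
    rw [F.map_smul_univ (fun i => lam (r i)) (fun i => q (r i))]
    have hcol : ∃ i j : Fin g, i ≠ j ∧ r i = r j := by
      apply Fintype.exists_ne_map_eq_of_card_lt r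
      simp only [Fintype.card_fin]
      omega
    obtain ⟨i, j, hij, hr⟩ := hcol
    rw [h (fun i => q (r i)) (fun i => hq (r i)) ⟨i, j, hij, show q (r i) = q (r j) by rw [hr]⟩, smul_zero]
  · -- (ii) → (i)
    intro h p hpS hcol
    obtain ⟨a, b, hab, hpab⟩ := hcol
    -- index manipulations
    have hb := b.2
    have ha := a.2
    set e : Fin (g - 1) → Fin g := fun j =>
      if _h : (j : ℕ) < (b : ℕ) then ⟨j, by have := j.2; omega⟩
      else ⟨(j : ℕ) + 1, by have := j.2; omega⟩ with he
    set s : Fin g → Fin (g - 1) := fun i =>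
      if _h : (i : ℕ) < (b : ℕ) then ⟨i, by omega⟩
      else ⟨(i : ℕ) - 1, by have := i.2; omega⟩ with hs
    set r : Fin g → Fin (g - 1) := fun i => if i = b then s a else s i with hr
    set q : Fin (g - 1) → V := fun j => p (e j) with hqdef
    have hsval : ∀ i : Fin g, ((s i) : ℕ) = if (i : ℕ) < (b : ℕ) then (i : ℕ) else (i : ℕ) - 1 := by
      intro i
      simp only [hs]
      split_ifs <;> rfl
    have heval : ∀ j : Fin (g - 1), ((e j) : ℕ)
        = if (j : ℕ) < (b : ℕ) then (j : ℕ) else (j : ℕ) + 1 := by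
      intro j
      simp only [he]
      split_ifs <;> rfl
    have hes : ∀ i : Fin g, i ≠ b → e (s i) = i := by
      intro i hib
      have hne : (i : ℕ) ≠ (b : ℕ) := fun hn => hib (Fin.ext hn)
      have hi2 := i.2
      apply Fin.ext
      rw [heval, hsval]
      split_ifs <;> omega
    have hpq : ∀ i : Fin g, p i = q (r i) := by
      intro i
      by_cases hib : i = b
      · subst hib
        simp only [hr, if_pos rfl, hqdef]
        rw [hes a hab, ← hpab]
      · simp only [hr, if_neg hib, hqdef, hes i hib]
    have hqS : ∀ j, q j ∈ S := fun j => hpS (e j)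
    -- polarization
    have hpol := polarization_aux F hF p
    have hz : ∀ T : Finset (Fin g), F (fun _ => ∑ i ∈ T, p i) = 0 := by
      intro T
      have hsum : (∑ i ∈ T, p i)
          = ∑ j : Fin (g - 1), ((T.filter (fun i => r i = j)).card : ℂ) • q j := by
        calc ∑ i ∈ T, p i = ∑ i ∈ T, q (r i) := Finset.sum_congr rfl fun i _ => hpq i
          _ = ∑ j : Fin (g - 1), ∑ i ∈ T.filter (fun i => r i = j), q j :=
              (Finset.sum_fiberwise' T r q).symm
          _ = ∑ j : Fin (g - 1), ((T.filter (fun i => r i = j)).card : ℂ) • q j := by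
              refine Finset.sum_congr rfl fun j _ => ?_
              rw [Finset.sum_const, Nat.cast_smul_eq_nsmul]
      simp only [hsum]
      exact h _ q hqS
    rw [Finset.sum_congr rfl (fun T _ => by rw [hz T, mul_zero])] at hpol
    rw [Finset.sum_const, smul_zero] at hpol
    have hfac : (g.factorial : ℂ) ≠ 0 := by
      exact_mod_cast Nat.cast_ne_zero.2 (Nat.factorial_ne_zero g)
    exact (mul_eq_zero.1 hpol.symm).resolve_left hfac
end

section
/- Let n, r ∈ ℕ and let Q ∈ ℂ[x_0, …, x_n] be a homogeneous polynomial of degree r. For a point P ∈ ℂ^{n+1} and l ∈ ℕ, say that Q vanishes at P with multiplicity at least l if for every multi-index α ∈ ℕ^{n+1} with |α| < l the iterated partial derivative ∂^α Q vanishes at P. Suppose P_1, P_2 ∈ ℂ^{n+1} are linearly independent, Q vanishes at P_1 with multiplicity at least l_1, and Q vanishes at P_2 with multiplicity at least l_2, where l_1, l_2 ∈ ℕ. Then for all s, t ∈ ℂ, the polynomial Q vanishes at the point s·P_1 + t·P_2 with multiplicity at least l_1 + l_2 − r (the conclusion being vacuous when l_1 + l_2 ≤ r). -/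
/-- The iterated partial derivative `∂^α Q` of a multivariate polynomial,
where `α` is a multi-index. -/
noncomputable def pderivMulti {n : ℕ} (α : Fin n → ℕ)
    (Q : MvPolynomial (Fin n) ℂ) : MvPolynomial (Fin n) ℂ :=
  (List.finRange n).foldr (fun i q => (fun p => MvPolynomial.pderiv i p)^[α i] q) Q

/-- `Q` vanishes at the point `P` with multiplicity at least `l`: every iterated
partial derivative `∂^α Q` with `|α| < l` vanishes at `P`. -/
def VanishesWithMultAtLeast {n : ℕ} (Q : MvPolynomial (Fin n) ℂ)
    (P : Fin n → ℂ) (l : ℕ) : Prop :=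
  ∀ α : Fin n → ℕ, (∑ i, α i) < l → MvPolynomial.eval P (pderivMulti α Q) = 0

open MvPolynomial

section Aux
variable {n : ℕ}


lemma pderiv_comm' (i j : Fin n) (p : MvPolynomial (Fin n) ℂ) :
    MvPolynomial.pderiv i (MvPolynomial.pderiv j p) = MvPolynomial.pderiv j (MvPolynomial.pderiv i p) := by
  induction p using MvPolynomial.induction_on with
  | C a => simp
  | add p q hp hq => simp [hp, hq]
  | mul_X p k hp =>
    by_cases hik : i = k <;> by_cases hjk : j = k <;>
      subst_vars <;>
      simp [pderiv_mul, hp, pderiv_X_self, pderiv_X_of_ne, *] <;> ring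

/-- the fold used in `pderivMulti`, over an arbitrary list -/
noncomputable def pfold (α : Fin n → ℕ) (L : List (Fin n)) (p : MvPolynomial (Fin n) ℂ) :
    MvPolynomial (Fin n) ℂ :=
  L.foldr (fun i q => (fun p => MvPolynomial.pderiv i p)^[α i] q) p

lemma pderivMulti_eq_pfold (α : Fin n → ℕ) (Q) :
    pderivMulti α Q = pfold α (List.finRange n) Q := rfl

lemma commute_pderiv_iter (i j : Fin n) (k : ℕ) :
    Function.Commute (fun p : MvPolynomial (Fin n) ℂ => MvPolynomial.pderiv i p)
      (fun p => MvPolynomial.pderiv j p)^[k] :=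
  Function.Commute.iterate_right (fun p => pderiv_comm' i j p) k

lemma pderiv_pfold (α : Fin n → ℕ) (L : List (Fin n)) (i : Fin n) (p) :
    MvPolynomial.pderiv i (pfold α L p) = pfold α L (MvPolynomial.pderiv i p) := by
  induction L generalizing p with
  | nil => rfl
  | cons j L ih =>
    simp only [pfold, List.foldr_cons] at *
    rw [← ih]
    exact (commute_pderiv_iter i j (α j)) _

lemma pderiv_iter_pfold (α : Fin n → ℕ) (L : List (Fin n)) (i : Fin n) (k : ℕ) (p) :
    (fun q : MvPolynomial (Fin n) ℂ => MvPolynomial.pderiv i q)^[k] (pfold α L p)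
      = pfold α L ((fun q => MvPolynomial.pderiv i q)^[k] p) := by
  induction k generalizing p with
  | zero => rfl
  | succ k ih =>
    simp only [Function.iterate_succ_apply]
    rw [pderiv_pfold, ih]

lemma pfold_add (α β : Fin n → ℕ) (L : List (Fin n)) (p) :
    pfold (α + β) L p = pfold α L (pfold β L p) := by
  induction L generalizing p with
  | nil => rfl
  | cons j L ih =>
    show (fun p => MvPolynomial.pderiv j p)^[(α + β) j] (pfold (α + β) L p)
      = (fun p => MvPolynomial.pderiv j p)^[α j]
          (pfold α L ((fun p => MvPolynomial.pderiv j p)^[β j] (pfold β L p)))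
    rw [ih, Pi.add_apply, Function.iterate_add_apply, pderiv_iter_pfold]

lemma pderivMulti_add (α β : Fin n → ℕ) (Q) :
    pderivMulti (α + β) Q = pderivMulti α (pderivMulti β Q) :=
  pfold_add α β _ Q

lemma pderivMulti_zero_index (Q : MvPolynomial (Fin n) ℂ) : pderivMulti 0 Q = Q := by
  rw [pderivMulti_eq_pfold]
  induction (List.finRange n) with
  | nil => rfl
  | cons j L ih => simpa [pfold] using ih

-- single index
lemma pfold_eq_of_not_mem (α : Fin n → ℕ) {i : Fin n} (L : List (Fin n)) (hL : ∀ j ∈ L, j ≠ i)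
    (p) : pfold (fun j => if j = i then 1 else 0) L p = p := by
  induction L generalizing p with
  | nil => rfl
  | cons j L ih =>
    simp only [pfold, List.foldr_cons] at *
    rw [ih (fun j hj => hL j (List.mem_cons_of_mem _ hj))]
    simp [hL j List.mem_cons_self]

lemma pfold_single (i : Fin n) (L : List (Fin n)) (hnd : L.Nodup) (hi : i ∈ L) (p) :
    pfold (fun j => if j = i then 1 else 0) L p = MvPolynomial.pderiv i p := by
  induction L generalizing p with
  | nil => simp at hi
  | cons j L ih =>
    rcases List.mem_cons.mp hi with h | h
    · subst h
      have hnm : ∀ k ∈ L, k ≠ i := by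
        intro k hk
        intro he; subst he
        exact (List.nodup_cons.mp hnd).1 hk
      show (fun p => MvPolynomial.pderiv i p)^[if i = i then 1 else 0]
        (pfold (fun j => if j = i then 1 else 0) L p) = MvPolynomial.pderiv i p
      rw [pfold_eq_of_not_mem (fun j => if j = i then 1 else 0) L hnm]
      simp
    · have hji : j ≠ i := by
        intro he; subst he
        exact (List.nodup_cons.mp hnd).1 h
      show (fun p => MvPolynomial.pderiv j p)^[if j = i then 1 else 0]
        (pfold (fun k => if k = i then 1 else 0) L p) = MvPolynomial.pderiv i p
      rw [ih (List.nodup_cons.mp hnd).2 h]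
      simp [hji]

lemma pderivMulti_single (i : Fin n) (p : MvPolynomial (Fin n) ℂ) :
    pderivMulti (fun j => if j = i then 1 else 0) p = MvPolynomial.pderiv i p :=
  pfold_single i _ (List.nodup_finRange n) (List.mem_finRange i) p

-- iterate linearity lemmas

lemma iter_pderiv_add (i : Fin n) (k : ℕ) (p q : MvPolynomial (Fin n) ℂ) :
    (fun r => MvPolynomial.pderiv i r)^[k] (p + q)
      = (fun r => MvPolynomial.pderiv i r)^[k] p + (fun r => MvPolynomial.pderiv i r)^[k] q := by
  induction k generalizing p q with
  | zero => rfl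
  | succ k ih => simp only [Function.iterate_succ_apply, map_add, ih]

lemma iter_pderiv_C_mul (i : Fin n) (k : ℕ) (c : ℂ) (p : MvPolynomial (Fin n) ℂ) :
    (fun r => MvPolynomial.pderiv i r)^[k] (MvPolynomial.C c * p)
      = MvPolynomial.C c * (fun r => MvPolynomial.pderiv i r)^[k] p := by
  induction k generalizing p with
  | zero => rfl
  | succ k ih => simp only [Function.iterate_succ_apply, pderiv_C_mul, ih]

lemma pderivMulti_poly_add (α : Fin n → ℕ) (p q : MvPolynomial (Fin n) ℂ) :
    pderivMulti α (p + q) = pderivMulti α p + pderivMulti α q := by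
  unfold pderivMulti
  induction (List.finRange n) generalizing p q with
  | nil => rfl
  | cons j L ih => simp only [List.foldr_cons, ih, iter_pderiv_add]

lemma pderivMulti_poly_C_mul (α : Fin n → ℕ) (c : ℂ) (p : MvPolynomial (Fin n) ℂ) :
    pderivMulti α (MvPolynomial.C c * p) = MvPolynomial.C c * pderivMulti α p := by
  unfold pderivMulti
  induction (List.finRange n) generalizing p with
  | nil => rfl
  | cons j L ih => simp only [List.foldr_cons, ih, iter_pderiv_C_mul]

lemma pderivMulti_poly_zero (α : Fin n → ℕ) :
    pderivMulti α (0 : MvPolynomial (Fin n) ℂ) = 0 := by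
  have := pderivMulti_poly_C_mul α 0 0
  simpa using this

-- Vanishing closure properties
lemma vanish_add {p q : MvPolynomial (Fin n) ℂ} {P l} (hp : VanishesWithMultAtLeast p P l)
    (hq : VanishesWithMultAtLeast q P l) : VanishesWithMultAtLeast (p + q) P l := by
  intro α hα
  rw [pderivMulti_poly_add, map_add, hp α hα, hq α hα, add_zero]

lemma vanish_C_mul {p : MvPolynomial (Fin n) ℂ} {P l} (c : ℂ)
    (hp : VanishesWithMultAtLeast p P l) :
    VanishesWithMultAtLeast (MvPolynomial.C c * p) P l := by
  intro α hα
  rw [pderivMulti_poly_C_mul, map_mul, hp α hα, mul_zero]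

lemma vanish_zero {P : Fin n → ℂ} {l : ℕ} :
    VanishesWithMultAtLeast (0 : MvPolynomial (Fin n) ℂ) P l := by
  intro α hα
  rw [pderivMulti_poly_zero, map_zero]

lemma vanish_sum {ι : Type*} (s : Finset ι) (f : ι → MvPolynomial (Fin n) ℂ) {P l}
    (h : ∀ i ∈ s, VanishesWithMultAtLeast (f i) P l) :
    VanishesWithMultAtLeast (∑ i ∈ s, f i) P l := by
  classical
  induction s using Finset.induction_on with
  | empty => simpa using vanish_zero
  | insert x s hx ih =>
    rw [Finset.sum_insert hx]
    exact vanish_add (h _ (Finset.mem_insert_self _ _))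
      (ih fun i hi => h i (Finset.mem_insert_of_mem hi))
lemma coeff_pderiv (i : Fin n) (p : MvPolynomial (Fin n) ℂ) (d : Fin n →₀ ℕ) :
    coeff d (MvPolynomial.pderiv i p) = ((d i + 1 : ℕ) : ℂ) * coeff (d + Finsupp.single i 1) p := by
  induction p using MvPolynomial.induction_on' with
  | add p q hp hq => simp [hp, hq]; ring
  | monomial s a =>
    rw [pderiv_monomial]
    by_cases hs : s = d + Finsupp.single i 1
    · subst hs
      rw [coeff_monomial, coeff_monomial, if_pos (add_tsub_cancel_right _ _), if_pos rfl]
      simp [Finsupp.add_apply, Finsupp.single_eq_same, mul_comm]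
    · rw [coeff_monomial, coeff_monomial, if_neg hs]
      by_cases h2 : s - Finsupp.single i 1 = d
      · have hsi : s i = 0 := by
          by_contra hc
          apply hs
          ext j
          by_cases hj : j = i
          · subst hj
            have := congrArg (fun f : Fin n →₀ ℕ => f j) h2
            simp only [Finsupp.tsub_apply, Finsupp.single_eq_same] at this
            simp [Finsupp.add_apply, Finsupp.single_eq_same]
            omega
          · have := congrArg (fun f : Fin n →₀ ℕ => f j) h2
            simp only [Finsupp.tsub_apply, Finsupp.single_eq_of_ne hj] at this
            simp [Finsupp.add_apply, Finsupp.single_eq_of_ne hj]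
            omega
        rw [if_pos h2, hsi]
        simp
      · rw [if_neg h2, mul_zero]

lemma weight_one_eq {k : ℕ} (d : Fin k →₀ ℕ) :
    (Finsupp.weight (1 : Fin k → ℕ)) d = ∑ i, d i := by
  rw [Finsupp.weight_apply, Finsupp.sum_fintype]
  · simp
  · intro i; simp

lemma hom_pderiv {p : MvPolynomial (Fin n) ℂ} {m : ℕ} (h : p.IsHomogeneous m) (i : Fin n) :
    (MvPolynomial.pderiv i p).IsHomogeneous (m - 1) := by
  intro d hd
  rw [coeff_pderiv] at hd
  have h2 : coeff (d + Finsupp.single i 1) p ≠ 0 := right_ne_zero_of_mul hd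
  have h3 := h h2
  rw [weight_one_eq] at h3 ⊢
  simp only [Finsupp.add_apply] at h3
  rw [Finset.sum_add_distrib] at h3
  have h4 : ∑ j, (Finsupp.single i 1 : Fin n →₀ ℕ) j = 1 := by
    rw [Finset.sum_eq_single i] <;> simp +contextual [Finsupp.single_eq_of_ne, Ne.symm]
  omega

lemma hom0_pderiv {p : MvPolynomial (Fin n) ℂ} (h : p.IsHomogeneous 0) (i : Fin n) :
    MvPolynomial.pderiv i p = 0 := by
  apply MvPolynomial.ext
  intro d
  rw [coeff_pderiv, coeff_zero]
  have hz : coeff (d + Finsupp.single i 1) p = 0 := by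
    by_contra hc
    have h3 := h hc
    rw [weight_one_eq] at h3
    simp only [Finsupp.add_apply] at h3
    rw [Finset.sum_add_distrib] at h3
    have h4 : ∑ j, (Finsupp.single i 1 : Fin n →₀ ℕ) j = 1 := by
      rw [Finset.sum_eq_single i] <;> simp +contextual [Finsupp.single_eq_of_ne, Ne.symm]
    omega
  rw [hz, mul_zero]

lemma hom_iter {p : MvPolynomial (Fin n) ℂ} {m : ℕ} (h : p.IsHomogeneous m) (i : Fin n) (k : ℕ) :
    ((fun q => MvPolynomial.pderiv i q)^[k] p).IsHomogeneous (m - k) := by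
  induction k generalizing p m with
  | zero => simpa using h
  | succ k ih =>
    rw [Function.iterate_succ_apply]
    have := ih (hom_pderiv h i)
    rwa [show m - 1 - k = m - (k + 1) by omega] at this

lemma iter_pderiv_zero_poly (i : Fin n) (k : ℕ) :
    (fun q : MvPolynomial (Fin n) ℂ => MvPolynomial.pderiv i q)^[k] 0 = 0 := by
  induction k with
  | zero => rfl
  | succ k ih => rw [Function.iterate_succ_apply, map_zero, ih]

lemma hom_iter_eq_zero {p : MvPolynomial (Fin n) ℂ} {m : ℕ} (h : p.IsHomogeneous m) (i : Fin n)
    {k : ℕ} (hk : m < k) : (fun q => MvPolynomial.pderiv i q)^[k] p = 0 := by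
  induction k generalizing p m with
  | zero => omega
  | succ k ih =>
    rcases Nat.eq_zero_or_pos m with hm | hm
    · subst hm
      rw [Function.iterate_succ_apply, hom0_pderiv h, iter_pderiv_zero_poly]
    · rw [Function.iterate_succ_apply]
      exact ih (hom_pderiv h i) (by omega)



lemma pfold_hom (α : Fin n → ℕ) (L : List (Fin n)) {p : MvPolynomial (Fin n) ℂ} {m : ℕ}
    (h : p.IsHomogeneous m) :
    (pfold α L p).IsHomogeneous (m - (L.map α).sum) := by
  induction L generalizing p m with
  | nil => simpa [pfold] using h
  | cons j L ih =>
    show ((fun q => MvPolynomial.pderiv j q)^[α j] (pfold α L p)).IsHomogeneous _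
    have := hom_iter (ih h) j (α j)
    rwa [show m - (L.map α).sum - α j = m - ((List.map α (j :: L)).sum) by
      simp [List.sum_cons]; omega] at this

lemma pfold_eq_zero (α : Fin n → ℕ) (L : List (Fin n)) {p : MvPolynomial (Fin n) ℂ} {m : ℕ}
    (h : p.IsHomogeneous m) (hm : m < (L.map α).sum) : pfold α L p = 0 := by
  induction L generalizing p m with
  | nil => simp at hm
  | cons j L ih =>
    show (fun q => MvPolynomial.pderiv j q)^[α j] (pfold α L p) = 0
    by_cases h' : m < (L.map α).sum
    · rw [ih h h', iter_pderiv_zero_poly]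
    · apply hom_iter_eq_zero (pfold_hom α L h) j
      simp only [List.map_cons, List.sum_cons] at hm
      omega

lemma pderivMulti_hom (α : Fin n → ℕ) {p : MvPolynomial (Fin n) ℂ} {m : ℕ}
    (h : p.IsHomogeneous m) : (pderivMulti α p).IsHomogeneous (m - ∑ i, α i) := by
  rw [pderivMulti_eq_pfold, Fin.sum_univ_def]
  exact pfold_hom α _ h

lemma pderivMulti_eq_zero (α : Fin n → ℕ) {p : MvPolynomial (Fin n) ℂ} {m : ℕ}
    (h : p.IsHomogeneous m) (hm : m < ∑ i, α i) : pderivMulti α p = 0 := by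
  rw [pderivMulti_eq_pfold]
  exact pfold_eq_zero α _ h (by rwa [← Fin.sum_univ_def])

lemma vanish_pderiv {p : MvPolynomial (Fin n) ℂ} {P : Fin n → ℂ} {l : ℕ}
    (hp : VanishesWithMultAtLeast p P l) (i : Fin n) :
    VanishesWithMultAtLeast (MvPolynomial.pderiv i p) P (l - 1) := by
  intro α hα
  rw [← pderivMulti_single i p, ← pderivMulti_add]
  have hsum : (∑ j, (α + fun j => if j = i then 1 else 0 : Fin n → ℕ) j) = (∑ j, α j) + 1 := by
    simp only [Pi.add_apply]
    rw [Finset.sum_add_distrib]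
    congr 1
    rw [Finset.sum_ite_eq' Finset.univ i (fun _ => 1)]
    simp
  apply hp
  omega

lemma vanish_pderivMulti {p : MvPolynomial (Fin n) ℂ} {P : Fin n → ℂ} {l : ℕ}
    (hp : VanishesWithMultAtLeast p P l) (β : Fin n → ℕ) :
    VanishesWithMultAtLeast (pderivMulti β p) P (l - ∑ i, β i) := by
  intro α hα
  rw [← pderivMulti_add]
  apply hp
  have : (∑ i, (α + β) i) = (∑ i, α i) + ∑ i, β i := by
    simp only [Pi.add_apply]; rw [Finset.sum_add_distrib]
  omega

lemma vanish_eval {p : MvPolynomial (Fin n) ℂ} {P : Fin n → ℂ} {l : ℕ}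
    (hp : VanishesWithMultAtLeast p P l) (hl : 0 < l) : MvPolynomial.eval P p = 0 := by
  have := hp 0 (by simpa using hl)
  rwa [pderivMulti_zero_index] at this

end Aux

section Two

lemma pderiv_aeval {m : ℕ} (g : Fin m → MvPolynomial (Fin 2) ℂ) (j : Fin 2)
    (p : MvPolynomial (Fin m) ℂ) :
    MvPolynomial.pderiv j (MvPolynomial.aeval g p)
      = ∑ i, MvPolynomial.aeval g (MvPolynomial.pderiv i p) * MvPolynomial.pderiv j (g i) := by
  induction p using MvPolynomial.induction_on with
  | C a => simp
  | add p q hp hq =>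
    simp only [map_add, hp, hq, ← Finset.sum_add_distrib, add_mul]
  | mul_X p k hp =>
    have h1 : ∀ i : Fin m,
        MvPolynomial.aeval g (p * MvPolynomial.pderiv i (MvPolynomial.X k))
            * MvPolynomial.pderiv j (g i)
          = if i = k then MvPolynomial.aeval g p * MvPolynomial.pderiv j (g k) else 0 := by
      intro i
      by_cases hik : i = k
      · subst hik
        simp [pderiv_X_self]
      · rw [pderiv_X_of_ne (Ne.symm hik), if_neg hik]
        simp
    symm
    calc (∑ i, MvPolynomial.aeval g (MvPolynomial.pderiv i (p * MvPolynomial.X k))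
            * MvPolynomial.pderiv j (g i))
        = ∑ i, (MvPolynomial.aeval g (MvPolynomial.pderiv i p) * g k * MvPolynomial.pderiv j (g i)
            + MvPolynomial.aeval g (p * MvPolynomial.pderiv i (MvPolynomial.X k))
                * MvPolynomial.pderiv j (g i)) := by
          apply Finset.sum_congr rfl
          intro i _
          rw [pderiv_mul, map_add, map_mul, map_mul, aeval_X, add_mul]
      _ = (∑ i, MvPolynomial.aeval g (MvPolynomial.pderiv i p) * g k
              * MvPolynomial.pderiv j (g i))
            + ∑ i, MvPolynomial.aeval g (p * MvPolynomial.pderiv i (MvPolynomial.X k))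
                * MvPolynomial.pderiv j (g i) := Finset.sum_add_distrib
      _ = (∑ i, MvPolynomial.aeval g (MvPolynomial.pderiv i p) * MvPolynomial.pderiv j (g i)) * g k
            + MvPolynomial.aeval g p * MvPolynomial.pderiv j (g k) := by
          congr 1
          · rw [Finset.sum_mul]
            apply Finset.sum_congr rfl
            intro i _
            ring
          · rw [Finset.sum_congr rfl (fun i _ => h1 i)]
            simp
      _ = MvPolynomial.pderiv j (MvPolynomial.aeval g (p * MvPolynomial.X k)) := by
          conv_rhs => rw [map_mul, aeval_X, pderiv_mul, hp]

lemma eval_aeval2 {m : ℕ} (g : Fin m → MvPolynomial (Fin 2) ℂ) (x : Fin 2 → ℂ)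
    (p : MvPolynomial (Fin m) ℂ) :
    MvPolynomial.eval x (MvPolynomial.aeval g p)
      = MvPolynomial.eval (fun i => MvPolynomial.eval x (g i)) p := by
  rw [MvPolynomial.aeval_def, MvPolynomial.eval_eval₂]
  have h : (MvPolynomial.eval x).comp (algebraMap ℂ (MvPolynomial (Fin 2) ℂ)) = RingHom.id ℂ := by
    apply RingHom.ext
    intro c
    simp [MvPolynomial.algebraMap_eq]
  rw [h, MvPolynomial.eval₂_id]

lemma evalpick0 (G : MvPolynomial (Fin 2) ℂ) {m : ℕ} (hG : G.IsHomogeneous m) :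
    MvPolynomial.eval ![1, 0] G = MvPolynomial.coeff (Finsupp.single 0 m) G := by
  rw [MvPolynomial.eval_eq']
  rw [Finset.sum_eq_single (Finsupp.single 0 m)]
  · simp [Fin.prod_univ_two]
  · intro d hd hne
    have hsum : d 0 + d 1 = m := by
      have := hG (MvPolynomial.mem_support_iff.mp hd)
      rw [weight_one_eq, Fin.sum_univ_two] at this
      exact this
    have hd1 : d 1 ≠ 0 := by
      intro h0
      apply hne
      ext j
      fin_cases j <;> simp_all [Finsupp.single_apply]
    rw [Fin.prod_univ_two]
    simp [hd1]
  · intro h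
    rw [MvPolynomial.notMem_support_iff.mp h, zero_mul]

lemma evalpick1 (G : MvPolynomial (Fin 2) ℂ) {m : ℕ} (hG : G.IsHomogeneous m) :
    MvPolynomial.eval ![0, 1] G = MvPolynomial.coeff (Finsupp.single 1 m) G := by
  rw [MvPolynomial.eval_eq']
  rw [Finset.sum_eq_single (Finsupp.single 1 m)]
  · simp [Fin.prod_univ_two]
  · intro d hd hne
    have hsum : d 0 + d 1 = m := by
      have := hG (MvPolynomial.mem_support_iff.mp hd)
      rw [weight_one_eq, Fin.sum_univ_two] at this
      exact this
    have hd0 : d 0 ≠ 0 := by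
      intro h0
      apply hne
      ext j
      fin_cases j <;> simp_all [Finsupp.single_apply]
    rw [Fin.prod_univ_two]
    simp [hd0]
  · intro h
    rw [MvPolynomial.notMem_support_iff.mp h, zero_mul]

lemma coeff_iter_gen (i : Fin 2) (b : ℕ) (p : MvPolynomial (Fin 2) ℂ) (d : Fin 2 →₀ ℕ) :
    coeff d ((fun q => MvPolynomial.pderiv i q)^[b] p)
      = ((∏ j ∈ Finset.range b, (d i + j + 1) : ℕ) : ℂ)
          * coeff (d + Finsupp.single i b) p := by
  induction b generalizing d with
  | zero => simp
  | succ b ih =>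
    rw [Function.iterate_succ_apply', coeff_pderiv, ih]
    have h1 : ((d + Finsupp.single i 1 : Fin 2 →₀ ℕ)) i = d i + 1 := by
      simp [Finsupp.add_apply, Finsupp.single_eq_same]
    have h3 : d + Finsupp.single i 1 + Finsupp.single i b = d + Finsupp.single i (b + 1) := by
      rw [add_assoc, ← Finsupp.single_add, add_comm 1 b]
    have h2 : (∏ j ∈ Finset.range (b + 1), (d i + j + 1))
        = (d i + 1) * ∏ j ∈ Finset.range b, (d i + 1 + j + 1) := by
      rw [Finset.prod_range_succ']
      rw [mul_comm]
      congr 1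
      apply Finset.prod_congr rfl
      intro j _
      omega
    rw [h1, h3, h2]
    push_cast
    ring

lemma coeff_iter (i : Fin 2) (b : ℕ) (p : MvPolynomial (Fin 2) ℂ) (d : Fin 2 →₀ ℕ)
    (hd : d i = 0) :
    coeff d ((fun q => MvPolynomial.pderiv i q)^[b] p)
      = (Nat.factorial b : ℂ) * coeff (d + Finsupp.single i b) p := by
  rw [coeff_iter_gen, hd]
  congr 2
  simpa using Finset.prod_range_add_one_eq_factorial b

end Two


section Core
variable {N : ℕ}

lemma vanish_D {p : MvPolynomial (Fin N) ℂ} {P : Fin N → ℂ} {l : ℕ}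
    (hp : VanishesWithMultAtLeast p P l) (c : Fin N → ℂ) :
    VanishesWithMultAtLeast (∑ i, MvPolynomial.C (c i) * MvPolynomial.pderiv i p) P (l - 1) := by
  apply vanish_sum
  intro i _
  exact vanish_C_mul _ (vanish_pderiv hp i)

lemma core_lemma {Q : MvPolynomial (Fin N) ℂ} {m l₁ l₂ : ℕ} (hQ : Q.IsHomogeneous m)
    {A B : Fin N → ℂ} (h₁ : VanishesWithMultAtLeast Q A l₁)
    (h₂ : VanishesWithMultAtLeast Q B l₂) (hlt : m < l₁ + l₂) (s t : ℂ) :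
    MvPolynomial.eval (s • A + t • B) Q = 0 := by
  set g : Fin N → MvPolynomial (Fin 2) ℂ :=
    fun i => MvPolynomial.C (A i) * MvPolynomial.X 0 + MvPolynomial.C (B i) * MvPolynomial.X 1
    with hg
  have hghom : ∀ i, (g i).IsHomogeneous 1 := fun i =>
    (MvPolynomial.isHomogeneous_C_mul_X _ _).add (MvPolynomial.isHomogeneous_C_mul_X _ _)
  have hF : (MvPolynomial.aeval g Q).IsHomogeneous m := by
    have := hQ.aeval g hghom
    simpa using this
  have hev : ∀ (p : MvPolynomial (Fin N) ℂ) (x : Fin 2 → ℂ),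
      MvPolynomial.eval x (MvPolynomial.aeval g p)
        = MvPolynomial.eval (fun i => A i * x 0 + B i * x 1) p := by
    intro p x
    rw [eval_aeval2]
    have hfun : (fun i => MvPolynomial.eval x (g i)) = fun i => A i * x 0 + B i * x 1 := by
      funext i
      simp [hg]
    rw [hfun]
  set DA : MvPolynomial (Fin N) ℂ → MvPolynomial (Fin N) ℂ :=
    fun p => ∑ i, MvPolynomial.C (A i) * MvPolynomial.pderiv i p with hDA
  set DB : MvPolynomial (Fin N) ℂ → MvPolynomial (Fin N) ℂ :=
    fun p => ∑ i, MvPolynomial.C (B i) * MvPolynomial.pderiv i p with hDB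
  have hchain0 : ∀ p : MvPolynomial (Fin N) ℂ,
      MvPolynomial.pderiv (0 : Fin 2) (MvPolynomial.aeval g p)
        = MvPolynomial.aeval g (DA p) := by
    intro p
    rw [pderiv_aeval, hDA]
    simp only [map_sum]
    apply Finset.sum_congr rfl
    intro i _
    rw [map_mul, MvPolynomial.aeval_C]
    have : MvPolynomial.pderiv (0 : Fin 2) (g i) = MvPolynomial.C (A i) := by
      simp [hg, MvPolynomial.pderiv_C_mul, MvPolynomial.pderiv_X_self,
        MvPolynomial.pderiv_X_of_ne (show (1 : Fin 2) ≠ 0 by decide)]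
    rw [this, MvPolynomial.algebraMap_eq, mul_comm]
  have hchain1 : ∀ p : MvPolynomial (Fin N) ℂ,
      MvPolynomial.pderiv (1 : Fin 2) (MvPolynomial.aeval g p)
        = MvPolynomial.aeval g (DB p) := by
    intro p
    rw [pderiv_aeval, hDB]
    simp only [map_sum]
    apply Finset.sum_congr rfl
    intro i _
    rw [map_mul, MvPolynomial.aeval_C]
    have : MvPolynomial.pderiv (1 : Fin 2) (g i) = MvPolynomial.C (B i) := by
      simp [hg, MvPolynomial.pderiv_C_mul, MvPolynomial.pderiv_X_self,
        MvPolynomial.pderiv_X_of_ne (show (0 : Fin 2) ≠ 1 by decide)]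
    rw [this, MvPolynomial.algebraMap_eq, mul_comm]
  have hchain0iter : ∀ (b : ℕ) (p : MvPolynomial (Fin N) ℂ),
      (fun q => MvPolynomial.pderiv (0 : Fin 2) q)^[b] (MvPolynomial.aeval g p)
        = MvPolynomial.aeval g (DA^[b] p) := by
    intro b
    induction b with
    | zero => intro p; rfl
    | succ b ih =>
      intro p
      rw [Function.iterate_succ_apply', Function.iterate_succ_apply', ih, hchain0]
  have hchain1iter : ∀ (b : ℕ) (p : MvPolynomial (Fin N) ℂ),
      (fun q => MvPolynomial.pderiv (1 : Fin 2) q)^[b] (MvPolynomial.aeval g p)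
        = MvPolynomial.aeval g (DB^[b] p) := by
    intro b
    induction b with
    | zero => intro p; rfl
    | succ b ih =>
      intro p
      rw [Function.iterate_succ_apply', Function.iterate_succ_apply', ih, hchain1]
  have hvanA : ∀ (b : ℕ), VanishesWithMultAtLeast (DA^[b] Q) B (l₂ - b) := by
    intro b
    induction b with
    | zero => simpa using h₂
    | succ b ih =>
      rw [Function.iterate_succ_apply']
      have := vanish_D ih A
      rwa [show l₂ - b - 1 = l₂ - (b + 1) by omega] at this
  have hvanB : ∀ (b : ℕ), VanishesWithMultAtLeast (DB^[b] Q) A (l₁ - b) := by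
    intro b
    induction b with
    | zero => simpa using h₁
    | succ b ih =>
      rw [Function.iterate_succ_apply']
      have := vanish_D ih B
      rwa [show l₁ - b - 1 = l₁ - (b + 1) by omega] at this
  have hF0 : MvPolynomial.aeval g Q = 0 := by
    apply MvPolynomial.ext
    intro d
    rw [MvPolynomial.coeff_zero]
    by_cases hd : d ∈ (MvPolynomial.aeval g Q).support
    swap
    · exact MvPolynomial.notMem_support_iff.mp hd
    have hsum : d 0 + d 1 = m := by
      have := hF (MvPolynomial.mem_support_iff.mp hd)
      rw [weight_one_eq, Fin.sum_univ_two] at this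
      exact this
    have hdec : d = Finsupp.single 0 (d 0) + Finsupp.single 1 (d 1) := by
      ext j
      fin_cases j <;> simp [Finsupp.single_apply]
    by_cases hcase : d 1 < l₁
    · -- use vanishing at A
      have hiterhom : ((fun q => MvPolynomial.pderiv (1 : Fin 2) q)^[d 1]
          (MvPolynomial.aeval g Q)).IsHomogeneous (d 0) := by
        have := hom_iter hF (1 : Fin 2) (d 1)
        rwa [show m - d 1 = d 0 by omega] at this
      have e1 : MvPolynomial.eval ![1, 0] ((fun q => MvPolynomial.pderiv (1 : Fin 2) q)^[d 1]
          (MvPolynomial.aeval g Q))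
          = (Nat.factorial (d 1) : ℂ) * MvPolynomial.coeff d (MvPolynomial.aeval g Q) := by
        rw [evalpick0 _ hiterhom, coeff_iter _ _ _ _
          (by simp [Finsupp.single_apply]), ← hdec]
      have e2 : MvPolynomial.eval ![1, 0] ((fun q => MvPolynomial.pderiv (1 : Fin 2) q)^[d 1]
          (MvPolynomial.aeval g Q)) = 0 := by
        rw [hchain1iter, hev]
        have hpt : (fun i => A i * (![1, 0] : Fin 2 → ℂ) 0 + B i * (![1, 0] : Fin 2 → ℂ) 1) = A := by
          funext i; simp
        rw [hpt]
        exact vanish_eval (hvanB (d 1)) (by omega)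
      rw [e2] at e1
      have hfac : (Nat.factorial (d 1) : ℂ) ≠ 0 := by
        exact_mod_cast Nat.factorial_ne_zero (d 1)
      exact (mul_eq_zero.mp e1.symm).resolve_left hfac
    · -- use vanishing at B
      have hcase2 : d 0 < l₂ := by omega
      have hiterhom : ((fun q => MvPolynomial.pderiv (0 : Fin 2) q)^[d 0]
          (MvPolynomial.aeval g Q)).IsHomogeneous (d 1) := by
        have := hom_iter hF (0 : Fin 2) (d 0)
        rwa [show m - d 0 = d 1 by omega] at this
      have hdec' : d = Finsupp.single 1 (d 1) + Finsupp.single 0 (d 0) := by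
        ext j
        fin_cases j <;> simp [Finsupp.single_apply]
      have e1 : MvPolynomial.eval ![0, 1] ((fun q => MvPolynomial.pderiv (0 : Fin 2) q)^[d 0]
          (MvPolynomial.aeval g Q))
          = (Nat.factorial (d 0) : ℂ) * MvPolynomial.coeff d (MvPolynomial.aeval g Q) := by
        rw [evalpick1 _ hiterhom, coeff_iter _ _ _ _
          (by simp [Finsupp.single_apply]), ← hdec']
      have e2 : MvPolynomial.eval ![0, 1] ((fun q => MvPolynomial.pderiv (0 : Fin 2) q)^[d 0]
          (MvPolynomial.aeval g Q)) = 0 := by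
        rw [hchain0iter, hev]
        have hpt : (fun i => A i * (![0, 1] : Fin 2 → ℂ) 0 + B i * (![0, 1] : Fin 2 → ℂ) 1) = B := by
          funext i; simp
        rw [hpt]
        exact vanish_eval (hvanA (d 0)) (by omega)
      rw [e2] at e1
      have hfac : (Nat.factorial (d 0) : ℂ) ≠ 0 := by
        exact_mod_cast Nat.factorial_ne_zero (d 0)
      exact (mul_eq_zero.mp e1.symm).resolve_left hfac
  have hpt2 : (fun i => A i * (![s, t] : Fin 2 → ℂ) 0 + B i * (![s, t] : Fin 2 → ℂ) 1)
      = s • A + t • B := by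
    funext i
    simp [mul_comm]
  calc MvPolynomial.eval (s • A + t • B) Q
      = MvPolynomial.eval (fun i => A i * (![s, t] : Fin 2 → ℂ) 0
          + B i * (![s, t] : Fin 2 → ℂ) 1) Q := by rw [hpt2]
    _ = MvPolynomial.eval ![s, t] (MvPolynomial.aeval g Q) := (hev Q ![s, t]).symm
    _ = 0 := by rw [hF0, map_zero]

end Core

/-- Lemma 5.3: a homogeneous form of degree `r` vanishing at two linearly independent
points `P₁`, `P₂` with multiplicities `l₁`, `l₂` vanishes with multiplicity at least
`l₁ + l₂ - r` at every point `s • P₁ + t • P₂` of the line through them. -/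
theorem vanishing_forms (n r : ℕ) (Q : MvPolynomial (Fin (n + 1)) ℂ)
    (hQ : Q.IsHomogeneous r)
    (P₁ P₂ : Fin (n + 1) → ℂ)
    (hind : LinearIndependent ℂ ![P₁, P₂])
    (l₁ l₂ : ℕ)
    (h₁ : VanishesWithMultAtLeast Q P₁ l₁)
    (h₂ : VanishesWithMultAtLeast Q P₂ l₂) :
    ∀ s t : ℂ, VanishesWithMultAtLeast Q (s • P₁ + t • P₂) (l₁ + l₂ - r) := by
  intro s t α hα
  by_cases hcase : (∑ i, α i) ≤ r
  · have hhom : (pderivMulti α Q).IsHomogeneous (r - ∑ i, α i) := pderivMulti_hom α hQ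
    have hv1 : VanishesWithMultAtLeast (pderivMulti α Q) P₁ (l₁ - ∑ i, α i) :=
      vanish_pderivMulti h₁ α
    have hv2 : VanishesWithMultAtLeast (pderivMulti α Q) P₂ (l₂ - ∑ i, α i) :=
      vanish_pderivMulti h₂ α
    have hlt : r - (∑ i, α i) < (l₁ - ∑ i, α i) + (l₂ - ∑ i, α i) := by omega
    exact core_lemma hhom hv1 hv2 hlt s t
  · rw [pderivMulti_eq_zero α hQ (by omega), map_zero]
end

section
/- Let m ≥ 1 and let a_0, …, a_m be pairwise distinct complex numbers. For t ∈ ℂ ∖ {a_0, …, a_m}, let γ(t) ∈ ℙ^m(ℂ) be the projective point [1/(t−a_0) : ⋯ : 1/(t−a_m)]. Let Cr be the standard Cremona inversion, defined on points with all homogeneous coordinates nonzero by Cr([x_0 : ⋯ : x_m]) = [x_0^{−1} : ⋯ : x_m^{−1}], and let π be the linear projection from the point [1 : ⋯ : 1], given by π([x_0 : ⋯ : x_m]) = [x_1 − x_0 : x_2 − x_0 : ⋯ : x_m − x_0] ∈ ℙ^{m−1}(ℂ), defined on points not equal to [1 : ⋯ : 1]. Then the composition π ∘ Cr contracts the curve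 γ to a single point: for every t ∈ ℂ ∖ {a_0, …, a_m}, the point Cr(γ(t)) is defined and distinct from [1 : ⋯ : 1], and π(Cr(γ(t))) = [a_0 − a_1 : a_0 − a_2 : ⋯ : a_0 − a_m]. -/
/-- The standard Cremona inversion, on the level of homogeneous coordinate vectors:
`[x₀ : ⋯ : x_m] ↦ [x₀⁻¹ : ⋯ : x_m⁻¹]` (defined on points with all coordinates nonzero). -/
noncomputable def cremona {m : ℕ} (x : Fin (m + 1) → ℂ) : Fin (m + 1) → ℂ :=
  fun i => (x i)⁻¹

/-- Lemma 4.4 ('composition_contracts'): the composition `π ∘ Cr` of the Cremona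
inversion and the linear projection `π([x₀ : ⋯ : x_m]) = [x₁ - x₀ : ⋯ : x_m - x₀]`
from the point `[1 : ⋯ : 1]` contracts the rational normal curve
`γ(t) = [1/(t-a₀) : ⋯ : 1/(t-a_m)]` to the single point
`[a₀ - a₁ : a₀ - a₂ : ⋯ : a₀ - a_m]`. -/
theorem composition_contracts (m : ℕ) (hm : 1 ≤ m) (a : Fin (m + 1) → ℂ)
    (ha : Function.Injective a) (t : ℂ) (ht : ∀ i, t ≠ a i) :
    (∀ i, (1 / (t - a i)) ≠ 0) ∧
    (¬ ∃ k : ℂ, cremona (fun i => 1 / (t - a i)) = k • (fun _ => (1 : ℂ))) ∧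
    (∃ k : ℂ, k ≠ 0 ∧
      (fun i : Fin m =>
          cremona (fun j => 1 / (t - a j)) i.succ - cremona (fun j => 1 / (t - a j)) 0)
        = k • fun i : Fin m => a 0 - a i.succ) := by
  have hcr : ∀ i, cremona (fun i => 1 / (t - a i)) i = t - a i := by
    intro i
    simp [cremona]
  refine ⟨fun i => ?_, ?_, 1, one_ne_zero, ?_⟩
  · have := sub_ne_zero_of_ne (ht i)
    simp [this]
  · rintro ⟨k, hk⟩
    have h0 := congrFun hk 0
    have h1 := congrFun hk 1
    rw [hcr] at h0 h1
    have : a (0 : Fin (m+1)) = a 1 := by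
      simp only [Pi.smul_apply, smul_eq_mul, mul_one] at h0 h1
      exact sub_right_injective (h0.trans h1.symm)
    have h01 : (0 : Fin (m+1)) ≠ 1 := by
      have : (1:ℕ) < m + 1 := by omega
      exact fun h => by simp [Fin.ext_iff, Nat.mod_eq_of_lt this] at h
    exact h01 (ha this)
  · funext i
    rw [hcr, hcr]
    simp
end
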